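/- Homogeneous matrix-quadratic (Neuts) equation: the explicit rate matrix R = −U B^{−1} satisfies U + R W + R² D = 0. -/

import Mathlib

open Matrix

theorem stmt_13 (l : ℕ)
    (W U D : Matrix (Fin (l+1)) (Fin (l+1)) ℝ)
    (hrow : (D + W + U).mulVec (fun _ => (1:ℝ)) = 0)
    (hDES : ∀ (i j : Fin (l+1)), j ≠ 0 → D i j = 0)
    (Ut : Matrix (Fin (l+1)) (Fin (l+1)) ℝ)
    (hUt : Ut = Matrix.vecMulVec (U.mulVec (fun _ => (1:ℝ)))
        (fun j => if j = (0 : Fin (l+1)) then (1:ℝ) else 0))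
    (B : Matrix (Fin (l+1)) (Fin (l+1)) ℝ)
    (hB : B = W + Ut)
    (hBinv : IsUnit B)
    (R : Matrix (Fin (l+1)) (Fin (l+1)) ℝ)
    (hR : R = -(U * B⁻¹)) :
    U + R * W + R * R * D = 0 := by
  -- e : matrix with all-ones column 0, zero elsewhere
  set e : Matrix (Fin (l+1)) (Fin (l+1)) ℝ :=
    fun _ j => if j = (0 : Fin (l+1)) then (1:ℝ) else 0 with he
  have hdet : IsUnit B.det := (Matrix.isUnit_iff_isUnit_det B).mp hBinv
  have hRB : R * B = -U := by
    rw [hR, neg_mul, Matrix.mul_assoc, Matrix.nonsing_inv_mul B hdet, Matrix.mul_one]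
  have hUte : Ut = U * e := by
    ext i j
    rw [Matrix.mul_apply]
    simp [hUt, he, Matrix.mul_apply, Matrix.vecMulVec_apply, Matrix.mulVec,
      dotProduct, mul_ite, mul_comm]
  have hD : D = -(B * e) := by
    ext i j
    by_cases hj : j = 0
    · subst hj
      have h0 := congrFun hrow i
      simp only [Matrix.mulVec, dotProduct, Matrix.add_apply, Pi.zero_apply,
        mul_one] at h0
      have hDi : D i 0 = ∑ k, D i k := by
        rw [Finset.sum_eq_single 0]
        · intro k _ hk; exact hDES i k hk
        · simp
      have : (B * e) i 0 = ∑ k, B i k := by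
        rw [Matrix.mul_apply]
        simp [Matrix.mul_apply, he]
      rw [Matrix.neg_apply, this, hDi, hB]
      simp only [Matrix.add_apply, hUte, Matrix.mul_apply]
      simp only [he]
      rw [Finset.sum_add_distrib]
      have hsum : ∑ k : Fin (l+1), ∑ x, U i x * (if k = 0 then (1:ℝ) else 0)
          = ∑ x, U i x := by
        have hk : ∀ k : Fin (l+1), ∑ x, U i x * (if k = 0 then (1:ℝ) else 0)
            = if k = 0 then ∑ x, U i x else 0 := by
          intro k; split <;> simp
        simp [hk]
      rw [hsum]
      rw [Finset.sum_add_distrib, Finset.sum_add_distrib] at h0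
      linarith [h0]
    · rw [hDES i j hj, Matrix.neg_apply]
      rw [Matrix.mul_apply]
      simp [Matrix.mul_apply, he, hj]
  have hW : W = B - U * e := by rw [hB, hUte]; exact (add_sub_cancel_right W (U * e)).symm
  rw [hW, hD]
  have expand : U + R * (B - U * e) + R * R * -(B * e)
      = U + R * B - R * (U * e) - R * (R * B) * e := by
    noncomm_ring
  rw [expand, hRB]
  noncomm_ring
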